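/- arXiv:1511.01379 — 5 statements merged into one kernel-verified Lean document; each statement's English description precedes it below -/
import Mathlib

section
/- Let b₁, b₂, …, b_q be nonnegative real numbers such that their sum is at most 1 and each bᵢ ≤ 1/2. Then the index set {1,…,q} can be partitioned into two sets J₁ and J₂ such that for each z ∈ {1,2}, the sum of bᵢ over i ∈ J_z is at most 2/3. -/
/-- Nonnegative reals summing to at most 1, each at most 1/2, can be split into two
groups each summing to at most 2/3. -/
theorem stmt1 (q : ℕ) (b : Fin q → ℝ) (h0 : ∀ i, 0 ≤ b i)
    (hsum : ∑ i, b i ≤ 1) (hhalf : ∀ i, b i ≤ 1 / 2) :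
    ∃ J : Finset (Fin q), (∑ i ∈ J, b i ≤ 2 / 3) ∧ (∑ i ∈ Jᶜ, b i ≤ 2 / 3) := by
  classical
  obtain ⟨J, hJmem, hJmax⟩ := Finset.exists_max_image
    ((Finset.univ.powerset).filter (fun s => ∑ i ∈ s, b i ≤ 2/3))
    (fun s => ∑ i ∈ s, b i) ⟨∅, by simp; norm_num⟩
  simp only [Finset.mem_filter, Finset.mem_powerset] at hJmem
  have hJle : ∑ i ∈ J, b i ≤ 2/3 := hJmem.2
  refine ⟨J, hJle, ?_⟩
  by_contra hc
  push_neg at hc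
  have hsplit : ∑ i ∈ J, b i + ∑ i ∈ Jᶜ, b i = ∑ i, b i := Finset.sum_add_sum_compl J b
  have hJsmall : ∑ i ∈ J, b i < 1/3 := by linarith
  -- dichotomy for elements of the complement
  have hdich : ∀ i ∈ Jᶜ, b i = 0 ∨ 2/3 - ∑ i ∈ J, b i < b i := by
    intro i hi
    by_cases hins : ∑ j ∈ insert i J, b j ≤ 2/3
    · have hmax := hJmax (insert i J) (by
        simp only [Finset.mem_filter, Finset.mem_powerset]
        exact ⟨Finset.subset_univ _, hins⟩)
      rw [Finset.sum_insert (Finset.mem_compl.mp hi)] at hmax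
      left
      have := h0 i
      linarith
    · push_neg at hins
      rw [Finset.sum_insert (Finset.mem_compl.mp hi)] at hins
      right; linarith
  set K := Jᶜ.filter (fun i => 2/3 - ∑ i ∈ J, b i < b i) with hK
  have hsumK : ∑ i ∈ Jᶜ, b i = ∑ i ∈ K, b i := by
    rw [hK, Finset.sum_filter_of_ne]
    intro i hi hne
    rcases hdich i hi with h | h
    · exact absurd h hne
    · exact h
  have hKle : ∑ i ∈ K, b i ≤ (K.card : ℝ) * (1/2) := by
    have := Finset.sum_le_card_nsmul K b (1/2) (fun i _ => hhalf i)
    simpa [nsmul_eq_mul] using this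
  rw [hsumK] at hc
  have hK2 : 2 ≤ K.card := by
    by_contra h
    push_neg at h
    have h1 : (K.card : ℝ) ≤ 1 := by exact_mod_cast Nat.lt_succ_iff.mp h
    nlinarith [hKle]
  have hKge : (K.card : ℝ) * (2/3 - ∑ i ∈ J, b i) ≤ ∑ i ∈ K, b i := by
    have := Finset.card_nsmul_le_sum K b (2/3 - ∑ i ∈ J, b i)
      (fun i hi => le_of_lt (Finset.mem_filter.mp hi).2)
    simpa [nsmul_eq_mul] using this
  have h2 : (2 : ℝ) ≤ (K.card : ℝ) := by exact_mod_cast hK2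
  have hpos : (0:ℝ) < 2/3 - ∑ i ∈ J, b i := by linarith
  have : 2 * (2/3 - ∑ i ∈ J, b i) ≤ (K.card : ℝ) * (2/3 - ∑ i ∈ J, b i) :=
    mul_le_mul_of_nonneg_right h2 (le_of_lt hpos)
  linarith
end

section
/- If a graph G has tree-partition width at most k, then the treewidth of G satisfies 1 + tw(G) ≤ 2·k. -/
open SimpleGraph Walk

/-- If a graph admits a tree-partition decomposition of width at most `k`, then it admits a
tree decomposition of width at most `2k - 1`, i.e. `1 + tw(G) ≤ 2k`. -/
theorem stmt4 {V N : Type*} [Fintype V] [DecidableEq V]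
    (G : SimpleGraph V)
    (T : SimpleGraph N) (B : N → Finset V) (k : ℕ)
    (htree : T.IsTree)
    (hpart : ∀ v : V, ∃! x : N, v ∈ B x)
    (hedge : ∀ u v : V, G.Adj u v →
      ∃ x y : N, u ∈ B x ∧ v ∈ B y ∧ (x = y ∨ T.Adj x y))
    (hwidth : ∀ x : N, (B x).card ≤ k) :
    ∃ (N' : Type) (T' : SimpleGraph N') (B' : N' → Finset V),
      T'.IsTree ∧
      (∀ u v : V, G.Adj u v → ∃ x : N', u ∈ B' x ∧ v ∈ B' x) ∧
      (∀ v : V, (T'.induce {x : N' | v ∈ B' x}).Connected) ∧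
      (∀ x : N', (B' x).card ≤ 2 * k) := by
  classical
  cases isEmpty_or_nonempty V with
  | inl hV =>
    refine ⟨PUnit, ⊥, fun _ => ∅, ⟨?_, ?_⟩, ?_, ?_, ?_⟩
    · exact ⟨fun a b => by rw [Subsingleton.elim a b]⟩
    · intro v c hc
      cases c with
      | nil => exact hc.ne_nil rfl
      | cons h _ => simp at h
    · intro u; exact (hV.false u).elim
    · intro v; exact (hV.false v).elim
    · intro x; simp
  | inr hV =>
    obtain ⟨v0⟩ := hV
    -- the unique node containing each vertex
    let f : V → N := fun v => (hpart v).choose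
    have hfB : ∀ v, v ∈ B (f v) := fun v => (hpart v).choose_spec.1
    have hfu : ∀ (v : V) (x : N), v ∈ B x → x = f v :=
      fun v x h => (hpart v).choose_spec.2 x h
    set r : N := f v0 with hr_def
    -- unique paths to the root
    let P : ∀ x : N, T.Walk x r := fun x => (htree.existsUnique_path x r).choose
    have hP : ∀ x, (P x).IsPath := fun x => (htree.existsUnique_path x r).choose_spec.1
    have hPu : ∀ (x : N) (q : T.Walk x r), q.IsPath → q = P x :=
      fun x q hq => (htree.existsUnique_path x r).choose_spec.2 q hq
    have hPr : P r = Walk.nil := (hPu r Walk.nil IsPath.nil).symm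
    have hparent_r : (P r).getVert 1 = r := by
      rw [hPr]
      rfl
    have hadj : ∀ x : N, x ≠ r → T.Adj x ((P x).getVert 1) :=
      fun x hx => (P x).adj_snd (Walk.not_nil_of_ne hx)
    have htail : ∀ x : N, x ≠ r → (P x).tail = P ((P x).getVert 1) :=
      fun x hx => hPu _ _ ((hP x).tail)
    have hlen : ∀ x : N, x ≠ r → (P ((P x).getVert 1)).length < (P x).length := by
      intro x hx
      have h1 := Walk.length_tail_add_one (Walk.not_nil_of_ne (p := P x) hx)
      rw [htail x hx] at h1
      omega
    have hparent_mem : ∀ x : N, (P x).getVert 1 ∈ (P x).support := by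
      intro x
      by_cases hx : x = r
      · subst hx
        rw [hparent_r]
        exact Walk.start_mem_support _
      · refine Walk.mem_support_iff_exists_getVert.2 ⟨1, rfl, ?_⟩
        have := Walk.not_nil_iff_lt_length.1 (Walk.not_nil_of_ne (p := P x) hx)
        omega
    have hdrop : ∀ (y x : N) (hx : x ∈ (P y).support), (P y).dropUntil x hx = P x :=
      fun y x hx => hPu x _ ((hP y).dropUntil hx)
    -- adjacent nodes: one is the parent of the other
    have hpar_or : ∀ x y : N, T.Adj x y →
        (P x).getVert 1 = y ∨ (P y).getVert 1 = x := by
      intro x y hxy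
      by_cases hy : y ∈ (P x).support
      · left
        have hedge_path : (Walk.cons hxy (Walk.nil : T.Walk y y)).IsPath := by
          refine IsPath.nil.cons ?_
          simp [hxy.ne]
        have ht : (P x).takeUntil y hy = Walk.cons hxy Walk.nil := by
          obtain ⟨p, hp, hup⟩ := htree.existsUnique_path x y
          rw [hup _ ((hP x).takeUntil hy), hup _ hedge_path]
        have hsplit := (P x).take_spec hy
        rw [ht] at hsplit
        rw [← hsplit, Walk.cons_append, Walk.nil_append, Walk.getVert_cons_succ (n := 0), Walk.getVert_zero]
      · right
        have hcons : (Walk.cons hxy.symm (P x)).IsPath := (hP x).cons hy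
        rw [← hPu y _ hcons, Walk.getVert_cons_succ (n := 0), Walk.getVert_zero]
    -- the finite set of relevant nodes
    set S : Set N := ⋃ u : V, {z | z ∈ (P (f u)).support} with hS_def
    have hS_fin : S.Finite := Set.finite_iUnion (fun u => (P (f u)).support.finite_toSet)
    have hfS : ∀ u : V, f u ∈ S := fun u => Set.mem_iUnion.2 ⟨u, (P (f u)).start_mem_support⟩
    have hrS : r ∈ S := Set.mem_iUnion.2 ⟨v0, (P (f v0)).end_mem_support⟩
    have hparS : ∀ x, x ∈ S → (P x).getVert 1 ∈ S := by
      intro x hx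
      obtain ⟨u, hu⟩ := Set.mem_iUnion.1 hx
      refine Set.mem_iUnion.2 ⟨u, ?_⟩
      exact Walk.support_dropUntil_subset _ hu
        (by rw [hdrop (f u) x hu]; exact hparent_mem x)
    haveI := hS_fin.fintype
    let e : ↥S ≃ Fin (Fintype.card ↥S) := Fintype.equivFin ↥S
    let ι : Fin (Fintype.card ↥S) → N := fun i => ((e.symm i : ↥S) : N)
    have hι_inj : Function.Injective ι :=
      Subtype.val_injective.comp e.symm.injective
    have hι_mem : ∀ i, ι i ∈ S := fun i => (e.symm i).2
    have hidx : ∀ x, x ∈ S → ∃ i, ι i = x := by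
      intro x hx
      exact ⟨e ⟨x, hx⟩, by simp [ι]⟩
    obtain ⟨ir, hir⟩ := hidx r hrS
    refine ⟨Fin (Fintype.card ↥S), T.comap ι,
      fun i => B (ι i) ∪ B ((P (ι i)).getVert 1), ⟨?_, ?_⟩, ?_, ?_, ?_⟩
    · -- connected
      haveI : Nonempty (Fin (Fintype.card ↥S)) := ⟨ir⟩
      refine ⟨?_⟩
      have hreach : ∀ (m : ℕ) (x : N) (i : Fin (Fintype.card ↥S)), ι i = x → x ∈ S →
          (P x).length ≤ m → (T.comap ι).Reachable i ir := by
        intro m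
        induction m with
        | zero =>
          intro x i hix hxS hlen0
          have : (P x).Nil := Walk.nil_iff_length_eq.2 (Nat.le_zero.1 hlen0)
          have hxr : x = r := this.eq
          have : i = ir := hι_inj (by rw [hix, hir, hxr])
          rw [this]
        | succ m ih =>
          intro x i hix hxS hlenm
          by_cases hxr : x = r
          · have : i = ir := hι_inj (by rw [hix, hir, hxr])
            rw [this]
          · have hyS : (P x).getVert 1 ∈ S := hparS x hxS
            obtain ⟨i', hi'⟩ := hidx _ hyS
            have hadj' : (T.comap ι).Adj i i' := by
              show T.Adj (ι i) (ι i')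
              rw [hix, hi']
              exact hadj x hxr
            exact hadj'.reachable.trans
              (ih _ i' hi' hyS (by have := hlen x hxr; omega))
      intro i j
      exact (hreach (P (ι i)).length (ι i) i rfl (hι_mem i) le_rfl).trans
        (hreach (P (ι j)).length (ι j) j rfl (hι_mem j) le_rfl).symm
    · -- acyclic
      intro i c hc
      exact htree.2 _ (hc.map (f := SimpleGraph.Hom.comap ι T) hι_inj)
    · -- edge cover
      intro u v huv
      obtain ⟨x, y, hux, hvy, hxy⟩ := hedge u v huv
      have hxu : x = f u := hfu u x hux
      have hyv : y = f v := hfu v y hvy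
      subst hxu hyv
      rcases hxy with heq | hadjxy
      · obtain ⟨i, hi⟩ := hidx (f u) (hfS u)
        refine ⟨i, Finset.mem_union_left _ ?_, Finset.mem_union_left _ ?_⟩
        · rw [hi]; exact hfB u
        · rw [hi, heq]; exact hfB v
      · rcases hpar_or _ _ hadjxy with hpa | hpb
        · obtain ⟨i, hi⟩ := hidx (f u) (hfS u)
          refine ⟨i, Finset.mem_union_left _ ?_, Finset.mem_union_right _ ?_⟩
          · rw [hi]; exact hfB u
          · rw [hi, hpa]; exact hfB v
        · obtain ⟨i, hi⟩ := hidx (f v) (hfS v)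
          refine ⟨i, Finset.mem_union_right _ ?_, Finset.mem_union_left _ ?_⟩
          · rw [hi, hpb]; exact hfB u
          · rw [hi]; exact hfB v
    · -- connectivity of the bags containing each vertex
      intro v
      obtain ⟨i0, hi0⟩ := hidx (f v) (hfS v)
      have hi0mem : i0 ∈ {x | v ∈ B (ι x) ∪ B ((P (ι x)).getVert 1)} := by
        simp only [Set.mem_setOf_eq]
        exact Finset.mem_union_left _ (by rw [hi0]; exact hfB v)
      have hcenter : ∀ a : ↥{x | v ∈ B (ι x) ∪ B ((P (ι x)).getVert 1)},
          ((T.comap ι).induce {x | v ∈ B (ι x) ∪ B ((P (ι x)).getVert 1)}).Reachable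
            a ⟨i0, hi0mem⟩ := by
        rintro ⟨a, ha⟩
        have ha' := Finset.mem_union.1 ha
        by_cases hcase : ι a = f v
        · have : a = i0 := hι_inj (by rw [hcase, hi0])
          subst this
          rfl
        · have hpar_eq : (P (ι a)).getVert 1 = f v := by
            rcases ha' with h1 | h2
            · exact absurd (hfu v _ h1) hcase
            · exact hfu v _ h2
          have har : ι a ≠ r := by
            intro h
            rw [h, hparent_r] at hpar_eq
            exact hcase (h.trans hpar_eq)
          have : ((T.comap ι).induce _).Adj ⟨a, ha⟩ ⟨i0, hi0mem⟩ := by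
            show T.Adj (ι a) (ι i0)
            rw [hi0, ← hpar_eq]
            exact hadj _ har
          exact this.reachable
      haveI : Nonempty ↥{x | v ∈ B (ι x) ∪ B ((P (ι x)).getVert 1)} := ⟨⟨i0, hi0mem⟩⟩
      exact ⟨fun a b => (hcenter a).trans (hcenter b).symm⟩
    · -- width
      intro i
      calc (B (ι i) ∪ B ((P (ι i)).getVert 1)).card
          ≤ (B (ι i)).card + (B ((P (ι i)).getVert 1)).card := Finset.card_union_le _ _
        _ ≤ k + k := Nat.add_le_add (hwidth _) (hwidth _)
        _ = 2 * k := (two_mul k).symm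
end

section
/- Let T be a tree whose vertex set is bipartitioned into sets A and B such that every vertex of B has degree exactly 2 in T and |A| = |B| + 1. Then for every vertex w ∈ A there exists a matching in T that matches every vertex of T except w. -/
/-- In a tree bipartitioned into `A` and `B` where every vertex of `B` has degree exactly 2
and `|A| = |B| + 1`, for every `w ∈ A` there is a matching covering all vertices except `w`. -/
theorem stmt7 {V : Type*} [Fintype V] (T : SimpleGraph V) [DecidableRel T.Adj]
    (hT : T.IsTree) (A B : Set V)
    (hdisj : Disjoint A B) (hcover : A ∪ B = Set.univ)
    (hbip : ∀ u v : V, T.Adj u v → (u ∈ A ∧ v ∈ B) ∨ (u ∈ B ∧ v ∈ A))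
    (hdeg : ∀ v ∈ B, T.degree v = 2)
    (hcard : A.ncard = B.ncard + 1) :
    ∀ w ∈ A, ∃ M : T.Subgraph, M.IsMatching ∧ M.verts = {v : V | v ≠ w} := by
  classical
  intro w hw
  -- canonical path from each vertex to `w`
  choose pth hpath huniq using fun v => hT.existsUnique_path v w
  -- the parent of a vertex (second vertex on the path to `w`)
  set pr : V → V := fun v => (pth v).getVert 1 with hpr
  -- length of the canonical path is the distance
  have hlen : ∀ v, (pth v).length = T.dist v w := by
    intro v
    obtain ⟨q, hq⟩ := hT.isConnected.exists_walk_length_eq_dist v w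
    have hqp : q.IsPath := q.isPath_of_length_eq_dist hq
    rw [← huniq v q hqp]; exact hq
  -- basic properties of the parent
  have hspec : ∀ v, v ≠ w → T.Adj v (pr v) ∧ T.dist (pr v) w + 1 = T.dist v w := by
    intro v hv
    obtain ⟨x, hadj, q, hq⟩ := SimpleGraph.Walk.exists_eq_cons_of_ne hv (pth v)
    have hx : pr v = x := by
      simp only [hpr, hq, SimpleGraph.Walk.getVert_cons_succ, SimpleGraph.Walk.getVert_zero]
    have hqpath : q.IsPath := by
      have := hpath v; rw [hq] at this; exact this.of_cons
    have hqeq : q = pth x := huniq x q hqpath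
    rw [hx]
    refine ⟨hadj, ?_⟩
    have h1 := hlen v
    rw [hq, SimpleGraph.Walk.length_cons, hqeq, hlen x] at h1
    omega
  have hadjpr : ∀ v, v ≠ w → T.Adj v (pr v) := fun v hv => (hspec v hv).1
  have hdistpr : ∀ v, v ≠ w → T.dist (pr v) w + 1 = T.dist v w := fun v hv => (hspec v hv).2
  -- uniqueness of the parent: any neighbor strictly closer to `w` is the parent
  have hP2 : ∀ v u, T.Adj v u → T.dist u w + 1 = T.dist v w → pr v = u := by
    intro v u hadj hd
    have hvs : v ∉ (pth u).support := by
      intro hm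
      have hvu : v ≠ u := hadj.ne
      have h1 : T.dist v w ≤ ((pth u).dropUntil v hm).length := SimpleGraph.dist_le _
      have h2 := congrArg SimpleGraph.Walk.length ((pth u).take_spec hm)
      rw [SimpleGraph.Walk.length_append] at h2
      have h3 : 1 ≤ ((pth u).takeUntil v hm).length := by
        rcases Nat.eq_zero_or_pos ((pth u).takeUntil v hm).length with h0 | h0
        · exact absurd (SimpleGraph.Walk.eq_of_length_eq_zero h0).symm hvu
        · exact h0
      rw [hlen u] at h2
      omega
    have hcp : (SimpleGraph.Walk.cons hadj (pth u)).IsPath := (hpath u).cons hvs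
    have := huniq v _ hcp
    simp only [hpr, ← this, SimpleGraph.Walk.getVert_cons_succ, SimpleGraph.Walk.getVert_zero]
  -- the other neighbor of a vertex is a child: its parent is the vertex itself
  have hL : ∀ b c, b ≠ w → T.Adj b c → c ≠ pr b → c ≠ w ∧ pr c = b := by
    intro b c hbw hadj hne
    have hcw : c ≠ w := by
      rintro rfl
      have hp1 : (SimpleGraph.Walk.cons hadj SimpleGraph.Walk.nil).IsPath := by
        simp [SimpleGraph.Walk.cons_isPath_iff, hbw]
      have := huniq b _ hp1
      apply hne
      simp only [hpr, ← this, SimpleGraph.Walk.getVert_cons_succ, SimpleGraph.Walk.getVert_zero]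
    refine ⟨hcw, ?_⟩
    by_cases hb : b ∈ (pth c).support
    · have hbc : b ≠ c := hadj.ne
      have h1 : T.dist b w ≤ ((pth c).dropUntil b hb).length := SimpleGraph.dist_le _
      have h2 := congrArg SimpleGraph.Walk.length ((pth c).take_spec hb)
      rw [SimpleGraph.Walk.length_append] at h2
      have h3 : 1 ≤ ((pth c).takeUntil b hb).length := by
        rcases Nat.eq_zero_or_pos ((pth c).takeUntil b hb).length with h0 | h0
        · exact absurd (SimpleGraph.Walk.eq_of_length_eq_zero h0) hbc.symm
        · exact h0
      rw [hlen c] at h2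
      have h4 : T.dist c w ≤ (SimpleGraph.Walk.cons hadj.symm (pth b)).length :=
        SimpleGraph.dist_le _
      rw [SimpleGraph.Walk.length_cons, hlen b] at h4
      exact hP2 c b hadj.symm (by omega)
    · exfalso
      have hcp : (SimpleGraph.Walk.cons hadj (pth c)).IsPath := (hpath c).cons hb
      have := huniq b _ hcp
      apply hne
      simp only [hpr, ← this, SimpleGraph.Walk.getVert_cons_succ, SimpleGraph.Walk.getVert_zero]
  -- parents of `A`-vertices lie in `B`, and vice versa
  have hprB : ∀ v, v ∈ A → v ≠ w → pr v ∈ B := by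
    intro v hvA hvw
    rcases hbip v (pr v) (hadjpr v hvw) with ⟨_, h⟩ | ⟨h, _⟩
    · exact h
    · exact absurd h (Set.disjoint_left.mp hdisj hvA)
  -- members of `A ∪ B`
  have hAB : ∀ v : V, v ∈ A ∨ v ∈ B := by
    intro v
    have : v ∈ A ∪ B := hcover ▸ Set.mem_univ v
    exact this
  have hwB : ∀ v, v ∈ B → v ≠ w := by
    intro v hvB h
    exact Set.disjoint_left.mp hdisj hw (h ▸ hvB)
  -- a child is not the parent
  have hnotpr : ∀ u v, v ≠ w → u ≠ w → v = pr u → u ≠ pr v := by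
    intro u v hvw huw hu hupr
    by_cases hprvw : pr v = w
    · exact huw (hupr.trans hprvw)
    · have h1 := hdistpr v hvw
      have h2 := hdistpr (pr v) hprvw
      rw [← hupr] at h1 h2
      rw [← hu] at h2
      omega
  -- construct the matching
  refine ⟨{ verts := {v : V | v ≠ w},
            Adj := fun x y => (x ∈ A ∧ x ≠ w ∧ y = pr x) ∨ (y ∈ A ∧ y ≠ w ∧ x = pr y),
            adj_sub := ?_, edge_vert := ?_, symm := ?_ }, ?_, rfl⟩
  · rintro x y (⟨hxA, hxw, rfl⟩ | ⟨hyA, hyw, rfl⟩)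
    · exact hadjpr x hxw
    · exact (hadjpr y hyw).symm
  · rintro x y (⟨hxA, hxw, _⟩ | ⟨hyA, hyw, rfl⟩)
    · exact hxw
    · exact hwB _ (hprB y hyA hyw)
  · constructor; rintro x y (h | h)
    · exact Or.inr h
    · exact Or.inl h
  · intro v hv
    have hvw : v ≠ w := hv
    rcases hAB v with hvA | hvB
    · -- v ∈ A : matched with its parent
      refine ⟨pr v, Or.inl ⟨hvA, hvw, rfl⟩, ?_⟩
      rintro u (⟨_, _, rfl⟩ | ⟨huA, huw, hvpr⟩)
      · rfl
      · exact absurd (hvpr ▸ hprB u huA huw) (Set.disjoint_left.mp hdisj hvA)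
    · -- v ∈ B : matched with its unique child
      have hbw : v ≠ w := hwB v hvB
      have hdeg2 : (T.neighborFinset v).card = 2 := by
        rw [T.card_neighborFinset_eq_degree]
        exact hdeg v hvB
      obtain ⟨c, hcmem, hcne⟩ :
          ∃ c, c ∈ T.neighborFinset v ∧ c ≠ pr v :=
        Finset.exists_mem_ne (by omega) (pr v)
      rw [SimpleGraph.mem_neighborFinset] at hcmem
      obtain ⟨hcw, hprc⟩ := hL v c hbw hcmem hcne
      have hcA : c ∈ A := by
        rcases hbip v c hcmem with ⟨h, _⟩ | ⟨_, h⟩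
        · exact absurd h (Set.disjoint_right.mp hdisj hvB)
        · exact h
      refine ⟨c, Or.inr ⟨hcA, hcw, hprc.symm⟩, ?_⟩
      rintro u (⟨huA, _, _⟩ | ⟨huA, huw, hu⟩)
      · exact absurd huA (Set.disjoint_right.mp hdisj hvB)
      · -- u is a child of v; show u = c
        by_contra huc
        have huadj : T.Adj v u := by
          have := hadjpr u huw
          rw [← hu] at this
          exact this.symm
        have hupr : u ≠ pr v := hnotpr u v hbw huw hu
        have hsub : ({u, c, pr v} : Finset V) ⊆ T.neighborFinset v := by
          intro x hx
          simp only [Finset.mem_insert, Finset.mem_singleton] at hx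
          rcases hx with rfl | rfl | rfl
          · exact (SimpleGraph.mem_neighborFinset _ _ _).mpr huadj
          · exact (SimpleGraph.mem_neighborFinset _ _ _).mpr hcmem
          · exact (SimpleGraph.mem_neighborFinset _ _ _).mpr (hadjpr v hbw)
        have hcard3 : ({u, c, pr v} : Finset V).card = 3 := by
          rw [Finset.card_insert_of_notMem (by simp [huc, hupr]),
            Finset.card_insert_of_notMem (by simp [hcne]), Finset.card_singleton]
        have := Finset.card_le_card hsub
        omega
end

section
/- Let A be an n×n skew-symmetric matrix over a field of characteristic zero, and let X, Y ⊆ {1,…,n} with |X| = |Y| = rank(A). Then det(A[X,X]) · det(A[Y,Y]) = (−1)^{|X|} · (det(A[X,Y]))², where A[S,T] denotes the submatrix with rows indexed by S and columns indexed by T. -/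
open Matrix Module

/-- Rank factorization: any matrix equals a product of an `n × r` and an `r × n` matrix,
where `r` is its rank. -/
lemma exists_rank_factorization {F : Type*} [Field F] {n : ℕ} (A : Matrix (Fin n) (Fin n) F) :
    ∃ (B : Matrix (Fin n) (Fin A.rank) F) (C : Matrix (Fin A.rank) (Fin n) F), A = B * C := by
  set W := LinearMap.range A.mulVecLin with hW
  have hfin : finrank F W = A.rank := rfl
  let b : Basis (Fin A.rank) F W := finBasisOfFinrankEq F W hfin
  let pb := Pi.basisFun F (Fin n)
  refine ⟨LinearMap.toMatrix b pb W.subtype, LinearMap.toMatrix pb b A.mulVecLin.rangeRestrict, ?_⟩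
  rw [← LinearMap.toMatrix_comp pb b pb, LinearMap.subtype_comp_codRestrict]; symm
  show LinearMap.toMatrix (Pi.basisFun F (Fin n)) (Pi.basisFun F (Fin n)) A.mulVecLin = A
  rw [LinearMap.toMatrix_eq_toMatrix', ← Matrix.toLin'_apply', LinearMap.toMatrix'_toLin']

/-- Minors of a factored matrix split as products of determinants. -/
lemma det_submatrix_mul {F : Type*} [Field F] {n r : ℕ}
    (B : Matrix (Fin n) (Fin r) F) (C : Matrix (Fin r) (Fin n) F)
    (f g : Fin r → Fin n) :
    ((B * C).submatrix f g).det = (B.submatrix f id).det * (C.submatrix id g).det := by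
  rw [Matrix.submatrix_mul B C f id g Function.bijective_id, Matrix.det_mul]

/-- Frobenius' theorem for skew-symmetric matrices: if `|X| = |Y| = rank A`, then
`det A[X,X] * det A[Y,Y] = (-1)^{|X|} * (det A[X,Y])^2`. -/
theorem stmt14 {F : Type*} [Field F] [CharZero F] {n : ℕ}
    (A : Matrix (Fin n) (Fin n) F) (hskew : A.transpose = -A)
    (X Y : Finset (Fin n)) (hX : X.card = A.rank) (hY : Y.card = A.rank) :
    (A.submatrix (X.orderEmbOfFin hX) (X.orderEmbOfFin hX)).det *
      (A.submatrix (Y.orderEmbOfFin hY) (Y.orderEmbOfFin hY)).det =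
    (-1 : F) ^ X.card *
      ((A.submatrix (X.orderEmbOfFin hX) (Y.orderEmbOfFin hY)).det) ^ 2 := by
  obtain ⟨B, C, hA⟩ := exists_rank_factorization A
  set fX : Fin A.rank → Fin n := ⇑(X.orderEmbOfFin hX) with hfX
  set fY : Fin A.rank → Fin n := ⇑(Y.orderEmbOfFin hY) with hfY
  -- key symmetry: det A[Y,X] = (-1)^r * det A[X,Y]
  have hsym : (A.submatrix fY fX).det = (-1 : F) ^ A.rank * (A.submatrix fX fY).det := by
    have h1 : A.submatrix fY fX = -((A.submatrix fX fY).transpose) := by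
      ext i j
      have := congrFun (congrFun hskew (fX j)) (fY i)
      simp only [Matrix.transpose_apply, Matrix.neg_apply] at this ⊢
      simp [Matrix.submatrix_apply]
      exact this
    rw [h1, Matrix.det_neg, Matrix.det_transpose]
    simp
  have key : ∀ f g : Fin A.rank → Fin n,
      (A.submatrix f g).det = (B.submatrix f id).det * (C.submatrix id g).det := by
    intro f g
    have h := congrArg (fun M : Matrix (Fin n) (Fin n) F => (M.submatrix f g).det) hA
    rw [h]
    exact det_submatrix_mul B C f g
  have hXY := key fX fY
  have hYX := key fY fX
  have hXX := key fX fX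
  have hYY := key fY fY
  have hprod : (A.submatrix fX fX).det * (A.submatrix fY fY).det
      = (A.submatrix fX fY).det * (A.submatrix fY fX).det := by
    rw [hXY, hYX, hXX, hYY]; ring
  rw [hprod, hsym, hX]
  ring
end

section
/- Let M be an n×m matrix over a field, let i₀ be a column index, j₀ a row index with M[j₀, i₀] ≠ 0, and define M' by the row operations M'[k, ℓ] = M[k, ℓ] − (M[k, i₀]/M[j₀, i₀])·M[j₀, ℓ] for all rows k ≠ j₀ and all columns ℓ, and M'[j₀, ℓ] = M[j₀, ℓ]. Suppose H is a graph on the rows and columns of M that is a completion of the bipartite graph of M (i.e., M[j,i] ≠ 0 implies row j is adjacent to column i in H), and suppose ⪯ is a strong H-ordering such that i₀ ⪯ ℓ for every column ℓ with M[j₀, ℓ] ≠ 0 and j₀ ⪯ k for every row k with M[k, i₀] ≠ 0. Then H is also a completion of the bipartite graph of M': whenever M'[k, ℓ] ≠ 0, row k is adjacent to column ℓ in H. -/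
/-- Fill-in invariant of one step of Gaussian elimination guided by a strong ordering:
if `H` (a graph on rows ⊕ columns) is a completion of the bipartite graph of `M`, the
ordering `le` is a strong `H`-ordering, the pivot column `i₀` is earliest among the nonzero
columns of the pivot row `j₀` and the pivot row is earliest among rows with a nonzero entry
in column `i₀`, then after eliminating column `i₀` with row `j₀` the graph `H` is still a
completion of the bipartite graph of the resulting matrix `M'`. -/
theorem stmt18 {F : Type*} [Field F] {n m : ℕ}
    (M : Matrix (Fin n) (Fin m) F)
    (H : SimpleGraph (Fin n ⊕ Fin m))
    (le : (Fin n ⊕ Fin m) → (Fin n ⊕ Fin m) → Prop)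
    (hlin : IsLinearOrder (Fin n ⊕ Fin m) le)
    (hcompl : ∀ (j : Fin n) (i : Fin m), M j i ≠ 0 → H.Adj (Sum.inl j) (Sum.inr i))
    (hstrong : ∀ a b c : Fin n ⊕ Fin m, H.Adj a b → H.Adj a c → le b c →
      ∀ d : Fin n ⊕ Fin m, H.Adj b d → le a d → H.Adj c d)
    (i₀ : Fin m) (j₀ : Fin n) (hpiv : M j₀ i₀ ≠ 0)
    (hcolmin : ∀ ℓ : Fin m, M j₀ ℓ ≠ 0 → le (Sum.inr i₀) (Sum.inr ℓ))
    (hrowmin : ∀ k : Fin n, M k i₀ ≠ 0 → le (Sum.inl j₀) (Sum.inl k))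
    (M' : Matrix (Fin n) (Fin m) F)
    (hM' : ∀ (k : Fin n) (ℓ : Fin m),
      M' k ℓ = if k = j₀ then M k ℓ else M k ℓ - (M k i₀ / M j₀ i₀) * M j₀ ℓ) :
    ∀ (k : Fin n) (ℓ : Fin m), M' k ℓ ≠ 0 → H.Adj (Sum.inl k) (Sum.inr ℓ) := by
  intro k ℓ hne
  rw [hM'] at hne
  by_cases hk : k = j₀
  · simp [hk] at hne
    exact hk ▸ hcompl j₀ ℓ hne
  · simp [hk] at hne
    by_cases hMkl : M k ℓ ≠ 0
    · exact hcompl k ℓ hMkl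
    · push_neg at hMkl
      rw [hMkl, zero_sub, neg_eq_zero] at hne
      have hki : M k i₀ ≠ 0 := fun h => hne (by simp [h])
      have hjl : M j₀ ℓ ≠ 0 := fun h => hne (by simp [h])
      exact hstrong (Sum.inr i₀) (Sum.inl j₀) (Sum.inl k)
        (hcompl j₀ i₀ hpiv).symm (hcompl k i₀ hki).symm
        (hrowmin k hki) (Sum.inr ℓ) (hcompl j₀ ℓ hjl) (hcolmin ℓ hjl)
end
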